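/- arXiv:1308.2168 — 4 statements merged into one kernel-verified Lean document; each statement's English description precedes it below -/
import Mathlib

section
/- The GHZ strategy wins the three-player game with certainty: with the shared state ψ having amplitudes ψ_{000} = 1/2, ψ_{011} = ψ_{101} = ψ_{110} = −1/2 and all other amplitudes 0, and with the unitaries R₀ = S₀ = T₀ = I₂ (identity) and R₁ = S₁ = T₁ = H (the Hadamard matrix (1/√2)[[1,1],[1,−1]]), the winning probability equals 1; equivalently, for every question (r,s,t) ∈ Q and every outcome (A,B,C) with A⊕B⊕C ≠ r∨s∨t, the amplitude ψ^{rst}_{ABC} vanishes. -/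
open scoped BigOperators

/-- A three-qubit state: a tensor with indices `A B C : Fin 2` and complex entries. -/
abbrev QState := Fin 2 → Fin 2 → Fin 2 → ℂ

/-- The antisymmetric epsilon tensor on `{0,1}` with `ε 0 1 = 1`. -/
noncomputable def eps : Fin 2 → Fin 2 → ℂ := fun i j =>
  if i = 0 ∧ j = 1 then 1 else if i = 1 ∧ j = 0 then -1 else 0

/-- The gamma matrix associated to the first (A) slot. -/
noncomputable def gammaA (a : QState) : Matrix (Fin 2) (Fin 2) ℂ :=
  Matrix.of fun A₁ A₂ => ∑ B₁, ∑ B₂, ∑ C₁, ∑ C₂,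
    eps B₁ B₂ * eps C₁ C₂ * a A₁ B₁ C₁ * a A₂ B₂ C₂

/-- The gamma matrix associated to the second (B) slot. -/
noncomputable def gammaB (a : QState) : Matrix (Fin 2) (Fin 2) ℂ :=
  Matrix.of fun B₁ B₂ => ∑ C₁, ∑ C₂, ∑ A₁, ∑ A₂,
    eps C₁ C₂ * eps A₁ A₂ * a A₁ B₁ C₁ * a A₂ B₂ C₂

/-- The gamma matrix associated to the third (C) slot. -/
noncomputable def gammaC (a : QState) : Matrix (Fin 2) (Fin 2) ℂ :=
  Matrix.of fun C₁ C₂ => ∑ A₁, ∑ A₂, ∑ B₁, ∑ B₂,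
    eps A₁ A₂ * eps B₁ B₂ * a A₁ B₁ C₁ * a A₂ B₂ C₂

/-- The (cubic) triple product `T(a)_{A₃B₁C₁} = ε^{A₁A₂} a_{A₁B₁C₁} γ^A(a)_{A₂A₃}`. -/
noncomputable def Trip (a : QState) : QState := fun A₃ B₁ C₁ =>
  ∑ A₁, ∑ A₂, eps A₁ A₂ * a A₁ B₁ C₁ * gammaA a A₂ A₃

/-- The symplectic bilinear form `{a,b} = ε^{AA'} ε^{BB'} ε^{CC'} a_{ABC} b_{A'B'C'}`. -/
noncomputable def symp (a b : QState) : ℂ :=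
  ∑ A, ∑ A', ∑ B, ∑ B', ∑ C, ∑ C',
    eps A A' * eps B B' * eps C C' * a A B C * b A' B' C'

/-- Cayley's hyperdeterminant of a three-qubit state. -/
noncomputable def CayleyDet (a : QState) : ℂ :=
  (a 0 0 0)^2 * (a 1 1 1)^2 + (a 0 0 1)^2 * (a 1 1 0)^2
    + (a 0 1 0)^2 * (a 1 0 1)^2 + (a 0 1 1)^2 * (a 1 0 0)^2
  - 2 * ( a 0 0 0 * a 0 0 1 * a 1 1 0 * a 1 1 1
        + a 0 0 0 * a 0 1 0 * a 1 0 1 * a 1 1 1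
        + a 0 0 0 * a 0 1 1 * a 1 0 0 * a 1 1 1
        + a 0 0 1 * a 0 1 0 * a 1 0 1 * a 1 1 0
        + a 0 0 1 * a 0 1 1 * a 1 0 0 * a 1 1 0
        + a 0 1 0 * a 0 1 1 * a 1 0 0 * a 1 0 1 )
  + 4 * ( a 0 0 0 * a 0 1 1 * a 1 0 1 * a 1 1 0
        + a 0 0 1 * a 0 1 0 * a 1 0 0 * a 1 1 1 )

/-- Local transformation of a state by 2×2 matrices acting on the three slots. -/
noncomputable def transform (R S T : Matrix (Fin 2) (Fin 2) ℂ) (ψ : QState) : QState :=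
  fun A B C => ∑ A', ∑ B', ∑ C', R A A' * S B B' * T C C' * ψ A' B' C'

/-- The question set of the three-player GHZ game. -/
def Questions : Finset (Fin 2 × Fin 2 × Fin 2) := {(0,0,0), (0,1,1), (1,0,1), (1,1,0)}

/-- Disjunction `r ∨ s ∨ t` of bits represented as elements of `Fin 2`. -/
noncomputable def orr (r s t : Fin 2) : Fin 2 := if r = 1 ∨ s = 1 ∨ t = 1 then 1 else 0

/-- The winning probability of the local strategy `(ψ, R, S, T)` in the three-player
GHZ game; note `A + B + C` in `Fin 2` is addition mod 2. -/
noncomputable def winProb (ψ : QState) (R S T : Fin 2 → Matrix (Fin 2) (Fin 2) ℂ) : ℝ :=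
  (1/4) * ∑ q ∈ Questions, ∑ A, ∑ B, ∑ C,
    if A + B + C = orr q.1 q.2.1 q.2.2
    then ‖transform (R q.1) (S q.2.1) (T q.2.2) ψ A B C‖ ^ 2 else 0

/-- The Hadamard matrix `(1/√2)[[1,1],[1,−1]]`. -/
noncomputable def Hmat : Matrix (Fin 2) (Fin 2) ℂ :=
  (Real.sqrt 2 : ℂ)⁻¹ • !![1, 1; 1, -1]

/-- The GHZ-game strategy: measure in the computational basis (identity) on
question `0` and in the Hadamard basis on question `1`. -/
noncomputable def ghzStrategy : Fin 2 → Matrix (Fin 2) (Fin 2) ℂ :=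
  fun i => if i = 0 then 1 else Hmat

/-- The GHZ state `(1/2)(|000⟩ − |011⟩ − |101⟩ − |110⟩)`. -/
noncomputable def ghzState : QState := fun A B C =>
  if (A, B, C) = ((0 : Fin 2), (0 : Fin 2), (0 : Fin 2)) then 1/2
  else if (A, B, C) = ((0 : Fin 2), (1 : Fin 2), (1 : Fin 2)) ∨
          (A, B, C) = ((1 : Fin 2), (0 : Fin 2), (1 : Fin 2)) ∨
          (A, B, C) = ((1 : Fin 2), (1 : Fin 2), (0 : Fin 2)) then -(1/2)
  else 0

lemma hpow : ((Real.sqrt 2 : ℝ) : ℂ)⁻¹ ^ 2 = 1/2 := by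
  rw [← Complex.ofReal_inv, ← Complex.ofReal_pow]
  norm_num [inv_pow, Real.sq_sqrt]

lemma t000 (A B C : Fin 2) :
    transform (ghzStrategy 0) (ghzStrategy 0) (ghzStrategy 0) ghzState A B C = ghzState A B C := by
  simp [transform, ghzStrategy, Fin.sum_univ_two, Matrix.one_apply]

lemma t011 (A B C : Fin 2) :
    transform (ghzStrategy 0) (ghzStrategy 1) (ghzStrategy 1) ghzState A B C =
    if (A,B,C) = (0,0,1) ∨ (A,B,C) = (0,1,0) ∨ (A,B,C) = (1,1,1) then 1/2
    else if (A,B,C) = (1,0,0) then -(1/2) else 0 := by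
  fin_cases A <;> fin_cases B <;> fin_cases C <;>
    simp [transform, ghzStrategy, Hmat, ghzState, Fin.sum_univ_two, Matrix.one_apply, Prod.mk.injEq, -Prod.mk_zero_zero, -Prod.mk_one_one, show (0:Fin 2) ≠ 1 by decide, show (1:Fin 2) ≠ 0 by decide] <;>
    first
      | linear_combination hpow
      | linear_combination -hpow

lemma t101 (A B C : Fin 2) :
    transform (ghzStrategy 1) (ghzStrategy 0) (ghzStrategy 1) ghzState A B C =
    if (A,B,C) = (0,0,1) ∨ (A,B,C) = (1,0,0) ∨ (A,B,C) = (1,1,1) then 1/2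
    else if (A,B,C) = (0,1,0) then -(1/2) else 0 := by
  fin_cases A <;> fin_cases B <;> fin_cases C <;>
    simp [transform, ghzStrategy, Hmat, ghzState, Fin.sum_univ_two, Matrix.one_apply, Prod.mk.injEq, -Prod.mk_zero_zero, -Prod.mk_one_one, show (0:Fin 2) ≠ 1 by decide, show (1:Fin 2) ≠ 0 by decide] <;>
    first
      | linear_combination hpow
      | linear_combination -hpow

lemma t110 (A B C : Fin 2) :
    transform (ghzStrategy 1) (ghzStrategy 1) (ghzStrategy 0) ghzState A B C =
    if (A,B,C) = (0,1,0) ∨ (A,B,C) = (1,0,0) ∨ (A,B,C) = (1,1,1) then 1/2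
    else if (A,B,C) = (0,0,1) then -(1/2) else 0 := by
  fin_cases A <;> fin_cases B <;> fin_cases C <;>
    simp [transform, ghzStrategy, Hmat, ghzState, Fin.sum_univ_two, Matrix.one_apply, Prod.mk.injEq, -Prod.mk_zero_zero, -Prod.mk_one_one, show (0:Fin 2) ≠ 1 by decide, show (1:Fin 2) ≠ 0 by decide] <;>
    first
      | linear_combination hpow
      | linear_combination -hpow

/-- the GHZ strategy wins the three-player game with certainty;
equivalently, every losing outcome has vanishing amplitude. -/
theorem ghz_strategy_wins_with_certainty :
    winProb ghzState ghzStrategy ghzStrategy ghzStrategy = 1 ∧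
    ∀ q ∈ Questions, ∀ A B C : Fin 2, A + B + C ≠ orr q.1 q.2.1 q.2.2 →
      transform (ghzStrategy q.1) (ghzStrategy q.2.1) (ghzStrategy q.2.2)
        ghzState A B C = 0 := by
  constructor
  · rw [winProb, show Questions = {(0,0,0), (0,1,1), (1,0,1), (1,1,0)} from rfl]
    rw [Finset.sum_insert (by decide), Finset.sum_insert (by decide),
        Finset.sum_insert (by decide), Finset.sum_singleton]
    simp only [t000, t011, t101, t110]
    norm_num [orr, ghzState, Fin.sum_univ_two, Prod.mk.injEq, -Prod.mk_zero_zero,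
      -Prod.mk_one_one, map_div₀, map_one, Complex.norm_two, map_neg, norm_div, norm_neg, norm_one,
      show (0:Fin 2) ≠ 1 by decide, show (1:Fin 2) ≠ 0 by decide,
      show (1:Fin 2) + 1 = 0 by decide, show (2:Fin 2) = 0 by decide]
  · intro q hq
    fin_cases hq <;> intro A B C h <;> fin_cases A <;> fin_cases B <;> fin_cases C <;>
      simp_all [t000, t011, t101, t110, orr, ghzState, Prod.mk.injEq, -Prod.mk_zero_zero,
        -Prod.mk_one_one, show (0:Fin 2) ≠ 1 by decide, show (1:Fin 2) ≠ 0 by decide,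
        show (1:Fin 2) + 1 = 0 by decide, show (2:Fin 2) = 0 by decide]
end

section
/- No local strategy using a rank-3 (W-class) state wins the three-player game with certainty: if a unit vector ψ ∈ ℂ²⊗ℂ²⊗ℂ² satisfies T(ψ) ≠ 0 and Det ψ = 0, then for every choice of unitary 2×2 matrices R₀, R₁, S₀, S₁, T₀, T₁ there exist a question (r,s,t) ∈ Q and an outcome (A,B,C) with A⊕B⊕C ≠ r∨s∨t such that ψ^{rst}_{ABC} ≠ 0; equivalently, the winning probability is strictly less than 1. -/
open scoped BigOperators

lemma transform_comp (R S T R' S' T' : Matrix (Fin 2) (Fin 2) ℂ) (a : QState)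
    (A B C : Fin 2) :
    transform R S T (transform R' S' T' a) A B C
      = transform (R*R') (S*S') (T*T') a A B C := by
  simp [transform, Matrix.mul_apply, Fin.sum_univ_two]
  ring

lemma transform_id (a : QState) (A B C : Fin 2) : transform 1 1 1 a A B C = a A B C := by
  fin_cases A <;> fin_cases B <;> fin_cases C <;>
    simp [transform, Matrix.one_apply, Fin.sum_univ_two]

lemma transform_zero (R S T : Matrix (Fin 2) (Fin 2) ℂ) (A B C : Fin 2) :
    transform R S T (0 : QState) A B C = 0 := by
  simp [transform]

lemma trip_slotA (Rm : Matrix (Fin 2) (Fin 2) ℂ) (a : QState) (A B C : Fin 2) :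
    Trip (transform Rm 1 1 a) A B C = Rm.det * transform Rm 1 1 (Trip a) A B C := by
  fin_cases A <;> fin_cases B <;> fin_cases C <;>
    (simp [Trip, gammaA, transform, eps, Matrix.det_fin_two, Matrix.one_apply,
      Fin.sum_univ_two]; ring)
lemma trip_slotB (Sm : Matrix (Fin 2) (Fin 2) ℂ) (a : QState) (A B C : Fin 2) :
    Trip (transform 1 Sm 1 a) A B C = Sm.det * transform 1 Sm 1 (Trip a) A B C := by
  fin_cases A <;> fin_cases B <;> fin_cases C <;>
    (simp [Trip, gammaA, transform, eps, Matrix.det_fin_two, Matrix.one_apply,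
      Fin.sum_univ_two]; ring)

lemma trip_slotC (Tm : Matrix (Fin 2) (Fin 2) ℂ) (a : QState) (A B C : Fin 2) :
    Trip (transform 1 1 Tm a) A B C = Tm.det * transform 1 1 Tm (Trip a) A B C := by
  fin_cases A <;> fin_cases B <;> fin_cases C <;>
    (simp [Trip, gammaA, transform, eps, Matrix.det_fin_two, Matrix.one_apply,
      Fin.sum_univ_two]; ring)

lemma det_slotA (Rm : Matrix (Fin 2) (Fin 2) ℂ) (a : QState) :
    CayleyDet (transform Rm 1 1 a) = Rm.det^2 * CayleyDet a := by
  simp [CayleyDet, transform, Matrix.det_fin_two, Matrix.one_apply, Fin.sum_univ_two]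
  ring

lemma det_slotB (Sm : Matrix (Fin 2) (Fin 2) ℂ) (a : QState) :
    CayleyDet (transform 1 Sm 1 a) = Sm.det^2 * CayleyDet a := by
  simp [CayleyDet, transform, Matrix.det_fin_two, Matrix.one_apply, Fin.sum_univ_two]
  ring

lemma det_slotC (Tm : Matrix (Fin 2) (Fin 2) ℂ) (a : QState) :
    CayleyDet (transform 1 1 Tm a) = Tm.det^2 * CayleyDet a := by
  simp [CayleyDet, transform, Matrix.det_fin_two, Matrix.one_apply, Fin.sum_univ_two]
  ring
lemma transform_mul_fun (R S T : Matrix (Fin 2) (Fin 2) ℂ) (c : ℂ) (g : QState)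
    (A B C : Fin 2) :
    transform R S T (fun a b c' => c * g a b c') A B C
      = c * transform R S T g A B C := by
  simp [transform, Fin.sum_univ_two]; ring

lemma transform_decomp (R S T : Matrix (Fin 2) (Fin 2) ℂ) (a : QState) :
    transform R S T a
      = transform R 1 1 (transform 1 S 1 (transform 1 1 T a)) := by
  funext A B C
  rw [transform_comp, transform_comp]
  simp

lemma trip_cov (R S T : Matrix (Fin 2) (Fin 2) ℂ) (a : QState) (A B C : Fin 2) :
    Trip (transform R S T a) A B C
      = (R.det * S.det * T.det) * transform R S T (Trip a) A B C := by
  rw [transform_decomp R S T a, trip_slotA]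
  have h1 : Trip (transform 1 S 1 (transform 1 1 T a))
      = fun A B C => (S.det * T.det) * transform 1 S 1 (transform 1 1 T (Trip a)) A B C := by
    funext A B C
    rw [trip_slotB]
    have h2 : Trip (transform 1 1 T a) = fun A B C => T.det * transform 1 1 T (Trip a) A B C := by
      funext A B C; rw [trip_slotC]
    rw [h2, transform_mul_fun]; ring
  rw [h1, transform_mul_fun, ← transform_decomp]
  ring

lemma det_cov (R S T : Matrix (Fin 2) (Fin 2) ℂ) (a : QState) :
    CayleyDet (transform R S T a) = (R.det * S.det * T.det)^2 * CayleyDet a := by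
  rw [transform_decomp, det_slotA, det_slotB, det_slotC]; ring
def IsMono (v : QState) (i : Fin 2 × Fin 2 × Fin 2) : Prop :=
  v i.1 i.2.1 i.2.2 ≠ 0 ∧ ∀ a b c : Fin 2, (a, b, c) ≠ i → v a b c = 0

lemma mono_of_vals (v : QState) (i : Fin 2 × Fin 2 × Fin 2)
    (hz : ∀ a b c : Fin 2, (a,b,c) ≠ i → v a b c = 0)
    (hne : ∃ A B C, v A B C ≠ 0) : IsMono v i := by
  refine ⟨?_, hz⟩
  intro h0
  obtain ⟨A,B,C,hA⟩ := hne
  rcases eq_or_ne (A,B,C) i with he | he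
  · subst he; exact hA h0
  · exact hA (hz A B C he)

lemma even_support_mono (φ : QState)
    (h1 : φ 0 0 1 = 0) (h2 : φ 0 1 0 = 0) (h3 : φ 1 0 0 = 0) (h4 : φ 1 1 1 = 0)
    (hd : CayleyDet φ = 0) (hne : ∃ A B C, Trip φ A B C ≠ 0) :
    ∃ A B C : Fin 2, A + B + C = 1 ∧ IsMono (Trip φ) (A, B, C) := by
  have e000 : Trip φ 0 0 0 = 0 := by
    simp [Trip, gammaA, eps, Fin.sum_univ_two, h1, h2, h3, h4]; try ring
  have e011 : Trip φ 0 1 1 = 0 := by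
    simp [Trip, gammaA, eps, Fin.sum_univ_two, h1, h2, h3, h4]; try ring
  have e101 : Trip φ 1 0 1 = 0 := by
    simp [Trip, gammaA, eps, Fin.sum_univ_two, h1, h2, h3, h4]; try ring
  have e110 : Trip φ 1 1 0 = 0 := by
    simp [Trip, gammaA, eps, Fin.sum_univ_two, h1, h2, h3, h4]; try ring
  have e001 : Trip φ 0 0 1 = -2 * (φ 0 0 0 * φ 0 1 1 * φ 1 0 1) := by
    simp [Trip, gammaA, eps, Fin.sum_univ_two, h1, h2, h3, h4]; try ring
  have e010 : Trip φ 0 1 0 = -2 * (φ 0 0 0 * φ 0 1 1 * φ 1 1 0) := by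
    simp [Trip, gammaA, eps, Fin.sum_univ_two, h1, h2, h3, h4]; try ring
  have e100 : Trip φ 1 0 0 = -2 * (φ 0 0 0 * φ 1 0 1 * φ 1 1 0) := by
    simp [Trip, gammaA, eps, Fin.sum_univ_two, h1, h2, h3, h4]; try ring
  have e111 : Trip φ 1 1 1 = -2 * (φ 0 1 1 * φ 1 0 1 * φ 1 1 0) := by
    simp [Trip, gammaA, eps, Fin.sum_univ_two, h1, h2, h3, h4]; try ring
  have hdf : φ 0 0 0 * φ 0 1 1 * φ 1 0 1 * φ 1 1 0 = 0 := by
    have : CayleyDet φ = 4 * (φ 0 0 0 * φ 0 1 1 * φ 1 0 1 * φ 1 1 0) := by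
      simp [CayleyDet, h1, h2, h3, h4]; try ring
    rw [this] at hd
    rcases mul_eq_zero.1 hd with h | h
    · norm_num at h
    · exact h
  rcases mul_eq_zero.1 hdf with hdf' | hp
  rcases mul_eq_zero.1 hdf' with hdf'' | hp
  rcases mul_eq_zero.1 hdf'' with hp | hp
  · -- φ 0 0 0 = 0, monomial at (1,1,1)
    refine ⟨1, 1, 1, by decide, mono_of_vals _ _ ?_ hne⟩
    intro a b c hne'
    fin_cases a <;> fin_cases b <;> fin_cases c
    · exact e000
    · exact e001.trans (by rw [hp]; ring)
    · exact e010.trans (by rw [hp]; ring)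
    · exact e011
    · exact e100.trans (by rw [hp]; ring)
    · exact e101
    · exact e110
    · exact absurd rfl hne'
  · -- φ 0 1 1 = 0, monomial at (1,0,0)
    refine ⟨1, 0, 0, by decide, mono_of_vals _ _ ?_ hne⟩
    intro a b c hne'
    fin_cases a <;> fin_cases b <;> fin_cases c
    · exact e000
    · exact e001.trans (by rw [hp]; ring)
    · exact e010.trans (by rw [hp]; ring)
    · exact e011
    · exact absurd rfl hne'
    · exact e101
    · exact e110
    · exact e111.trans (by rw [hp]; ring)
  · -- φ 1 0 1 = 0, monomial at (0,1,0)
    refine ⟨0, 1, 0, by decide, mono_of_vals _ _ ?_ hne⟩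
    intro a b c hne'
    fin_cases a <;> fin_cases b <;> fin_cases c
    · exact e000
    · exact e001.trans (by rw [hp]; ring)
    · exact absurd rfl hne'
    · exact e011
    · exact e100.trans (by rw [hp]; ring)
    · exact e101
    · exact e110
    · exact e111.trans (by rw [hp]; ring)
  · -- φ 1 1 0 = 0, monomial at (0,0,1)
    refine ⟨0, 0, 1, by decide, mono_of_vals _ _ ?_ hne⟩
    intro a b c hne'
    fin_cases a <;> fin_cases b <;> fin_cases c
    · exact e000
    · exact absurd rfl hne'
    · exact e010.trans (by rw [hp]; ring)
    · exact e011
    · exact e100.trans (by rw [hp]; ring)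
    · exact e101
    · exact e110
    · exact e111.trans (by rw [hp]; ring)
lemma odd_support_mono (φ : QState)
    (h1 : φ 0 0 0 = 0) (h2 : φ 0 1 1 = 0) (h3 : φ 1 0 1 = 0) (h4 : φ 1 1 0 = 0)
    (hd : CayleyDet φ = 0) (hne : ∃ A B C, Trip φ A B C ≠ 0) :
    ∃ A B C : Fin 2, A + B + C = 0 ∧ IsMono (Trip φ) (A, B, C) := by
  have e001 : Trip φ 0 0 1 = 0 := by
    simp [Trip, gammaA, eps, Fin.sum_univ_two, h1, h2, h3, h4]; try ring
  have e010 : Trip φ 0 1 0 = 0 := by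
    simp [Trip, gammaA, eps, Fin.sum_univ_two, h1, h2, h3, h4]; try ring
  have e100 : Trip φ 1 0 0 = 0 := by
    simp [Trip, gammaA, eps, Fin.sum_univ_two, h1, h2, h3, h4]; try ring
  have e111 : Trip φ 1 1 1 = 0 := by
    simp [Trip, gammaA, eps, Fin.sum_univ_two, h1, h2, h3, h4]; try ring
  have e000 : Trip φ 0 0 0 = 2 * (φ 0 0 1 * φ 0 1 0 * φ 1 0 0) := by
    simp [Trip, gammaA, eps, Fin.sum_univ_two, h1, h2, h3, h4]; try ring
  have e011 : Trip φ 0 1 1 = 2 * (φ 0 0 1 * φ 0 1 0 * φ 1 1 1) := by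
    simp [Trip, gammaA, eps, Fin.sum_univ_two, h1, h2, h3, h4]; try ring
  have e101 : Trip φ 1 0 1 = 2 * (φ 0 0 1 * φ 1 0 0 * φ 1 1 1) := by
    simp [Trip, gammaA, eps, Fin.sum_univ_two, h1, h2, h3, h4]; try ring
  have e110 : Trip φ 1 1 0 = 2 * (φ 0 1 0 * φ 1 0 0 * φ 1 1 1) := by
    simp [Trip, gammaA, eps, Fin.sum_univ_two, h1, h2, h3, h4]; try ring
  have hdf : φ 0 0 1 * φ 0 1 0 * φ 1 0 0 * φ 1 1 1 = 0 := by
    have : CayleyDet φ = 4 * (φ 0 0 1 * φ 0 1 0 * φ 1 0 0 * φ 1 1 1) := by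
      simp [CayleyDet, h1, h2, h3, h4]; try ring
    rw [this] at hd
    rcases mul_eq_zero.1 hd with h | h
    · norm_num at h
    · exact h
  rcases mul_eq_zero.1 hdf with hdf' | hp
  rcases mul_eq_zero.1 hdf' with hdf'' | hp
  rcases mul_eq_zero.1 hdf'' with hp | hp
  · -- φ 0 0 1 = 0, monomial at (1,1,0)
    refine ⟨1, 1, 0, by decide, mono_of_vals _ _ ?_ hne⟩
    intro a b c hne'
    fin_cases a <;> fin_cases b <;> fin_cases c
    · exact e000.trans (by rw [hp]; ring)
    · exact e001
    · exact e010
    · exact e011.trans (by rw [hp]; ring)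
    · exact e100
    · exact e101.trans (by rw [hp]; ring)
    · exact absurd rfl hne'
    · exact e111
  · -- φ 0 1 0 = 0, monomial at (1,0,1)
    refine ⟨1, 0, 1, by decide, mono_of_vals _ _ ?_ hne⟩
    intro a b c hne'
    fin_cases a <;> fin_cases b <;> fin_cases c
    · exact e000.trans (by rw [hp]; ring)
    · exact e001
    · exact e010
    · exact e011.trans (by rw [hp]; ring)
    · exact e100
    · exact absurd rfl hne'
    · exact e110.trans (by rw [hp]; ring)
    · exact e111
  · -- φ 1 0 0 = 0, monomial at (0,1,1)
    refine ⟨0, 1, 1, by decide, mono_of_vals _ _ ?_ hne⟩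
    intro a b c hne'
    fin_cases a <;> fin_cases b <;> fin_cases c
    · exact e000.trans (by rw [hp]; ring)
    · exact e001
    · exact e010
    · exact absurd rfl hne'
    · exact e100
    · exact e101.trans (by rw [hp]; ring)
    · exact e110.trans (by rw [hp]; ring)
    · exact e111
  · -- φ 1 1 1 = 0, monomial at (0,0,0)
    refine ⟨0, 0, 0, by decide, mono_of_vals _ _ ?_ hne⟩
    intro a b c hne'
    fin_cases a <;> fin_cases b <;> fin_cases c
    · exact absurd rfl hne'
    · exact e001
    · exact e010
    · exact e011.trans (by rw [hp]; ring)
    · exact e100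
    · exact e101.trans (by rw [hp]; ring)
    · exact e110.trans (by rw [hp]; ring)
    · exact e111
lemma transform_of_mono (M1 M2 M3 : Matrix (Fin 2) (Fin 2) ℂ) (g : QState)
    (A B C : Fin 2)
    (hz : ∀ a b c : Fin 2, (a,b,c) ≠ (A,B,C) → g a b c = 0) (a b c : Fin 2) :
    transform M1 M2 M3 g a b c = M1 a A * M2 b B * M3 c C * g A B C := by
  show (∑ A', ∑ B', ∑ C', M1 a A' * M2 b B' * M3 c C' * g A' B' C') = _
  fin_cases A <;> fin_cases B <;> fin_cases C
  · simp [Fin.sum_univ_two, hz 0 0 1 (by decide), hz 0 1 0 (by decide), hz 0 1 1 (by decide), hz 1 0 0 (by decide), hz 1 0 1 (by decide), hz 1 1 0 (by decide), hz 1 1 1 (by decide)]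
  · simp [Fin.sum_univ_two, hz 0 0 0 (by decide), hz 0 1 0 (by decide), hz 0 1 1 (by decide), hz 1 0 0 (by decide), hz 1 0 1 (by decide), hz 1 1 0 (by decide), hz 1 1 1 (by decide)]
  · simp [Fin.sum_univ_two, hz 0 0 0 (by decide), hz 0 0 1 (by decide), hz 0 1 1 (by decide), hz 1 0 0 (by decide), hz 1 0 1 (by decide), hz 1 1 0 (by decide), hz 1 1 1 (by decide)]
  · simp [Fin.sum_univ_two, hz 0 0 0 (by decide), hz 0 0 1 (by decide), hz 0 1 0 (by decide), hz 1 0 0 (by decide), hz 1 0 1 (by decide), hz 1 1 0 (by decide), hz 1 1 1 (by decide)]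
  · simp [Fin.sum_univ_two, hz 0 0 0 (by decide), hz 0 0 1 (by decide), hz 0 1 0 (by decide), hz 0 1 1 (by decide), hz 1 0 1 (by decide), hz 1 1 0 (by decide), hz 1 1 1 (by decide)]
  · simp [Fin.sum_univ_two, hz 0 0 0 (by decide), hz 0 0 1 (by decide), hz 0 1 0 (by decide), hz 0 1 1 (by decide), hz 1 0 0 (by decide), hz 1 1 0 (by decide), hz 1 1 1 (by decide)]
  · simp [Fin.sum_univ_two, hz 0 0 0 (by decide), hz 0 0 1 (by decide), hz 0 1 0 (by decide), hz 0 1 1 (by decide), hz 1 0 0 (by decide), hz 1 0 1 (by decide), hz 1 1 1 (by decide)]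
  · simp [Fin.sum_univ_two, hz 0 0 0 (by decide), hz 0 0 1 (by decide), hz 0 1 0 (by decide), hz 0 1 1 (by decide), hz 1 0 0 (by decide), hz 1 0 1 (by decide), hz 1 1 0 (by decide)]
lemma col_ne_zero (V : Matrix (Fin 2) (Fin 2) ℂ) (hV : V.conjTranspose * V = 1) (j : Fin 2) :
    ∃ i, V i j ≠ 0 := by
  by_contra h
  push_neg at h
  have hBB : (V.conjTranspose * V) j j = (1 : Matrix (Fin 2) (Fin 2) ℂ) j j := by rw [hV]
  simp [Matrix.mul_apply, Matrix.conjTranspose_apply, Fin.sum_univ_two,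
    Matrix.one_apply, h 0, h 1] at hBB

lemma det_ne_zero (V : Matrix (Fin 2) (Fin 2) ℂ) (hV : V.conjTranspose * V = 1) : V.det ≠ 0 := by
  have h : V.conjTranspose.det * V.det = 1 := by rw [← Matrix.det_mul, hV, Matrix.det_one]
  exact right_ne_zero_of_mul_eq_one h

lemma slot_facts (M1 M2 M3 : Matrix (Fin 2) (Fin 2) ℂ)
    (h1 : M1.conjTranspose * M1 = 1) (h2 : M2.conjTranspose * M2 = 1) (h3 : M3.conjTranspose * M3 = 1)
    (g g1 : QState) (A B C A₁ B₁ C₁ : Fin 2)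
    (hm : IsMono g (A, B, C)) (hm1 : IsMono g1 (A₁, B₁, C₁))
    (hg1 : ∀ a b c, g1 a b c = transform M1 M2 M3 g a b c) :
    (M1 A₁ A ≠ 0 ∧ ∀ a, M1 a A ≠ 0 → a = A₁) ∧
    (M2 B₁ B ≠ 0 ∧ ∀ b, M2 b B ≠ 0 → b = B₁) ∧
    (M3 C₁ C ≠ 0 ∧ ∀ c, M3 c C ≠ 0 → c = C₁) := by
  obtain ⟨hκ, hz⟩ := hm
  obtain ⟨a0, ha0⟩ := col_ne_zero M1 h1 A
  obtain ⟨b0, hb0⟩ := col_ne_zero M2 h2 B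
  obtain ⟨c0, hc0⟩ := col_ne_zero M3 h3 C
  have hform : ∀ a b c, g1 a b c = M1 a A * M2 b B * M3 c C * g A B C := by
    intro a b c; rw [hg1, transform_of_mono _ _ _ _ A B C hz]
  have key : ∀ a b c : Fin 2, M1 a A ≠ 0 → M2 b B ≠ 0 → M3 c C ≠ 0 →
      (a, b, c) = ((A₁, B₁, C₁) : Fin 2 × Fin 2 × Fin 2) := by
    intro a b c ha hb hc
    by_contra hne
    have : g1 a b c = 0 := hm1.2 a b c hne
    rw [hform] at this
    exact (mul_ne_zero (mul_ne_zero (mul_ne_zero ha hb) hc) hκ) this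
  have hmain := key a0 b0 c0 ha0 hb0 hc0
  have ea : a0 = A₁ := congrArg (fun p => p.1) hmain
  have eb : b0 = B₁ := congrArg (fun p => p.2.1) hmain
  have ec : c0 = C₁ := congrArg (fun p => p.2.2) hmain
  subst ea; subst eb; subst ec
  refine ⟨⟨ha0, ?_⟩, ⟨hb0, ?_⟩, ⟨hc0, ?_⟩⟩
  · intro a ha; exact congrArg (fun p => p.1) (key a b0 c0 ha hb0 hc0)
  · intro b hb; exact congrArg (fun p => p.2.1) (key a0 b c0 ha0 hb hc0)
  · intro c hc; exact congrArg (fun p => p.2.2) (key a0 b0 c ha0 hb0 hc)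
lemma dot_unitary (R : Matrix (Fin 2) (Fin 2) ℂ) (hR : R.conjTranspose * R = 1)
    (x : Fin 2 → ℂ) :
    ∑ i, (starRingEnd ℂ) (R.mulVec x i) * R.mulVec x i
      = ∑ i, (starRingEnd ℂ) (x i) * x i := by
  have h : dotProduct (star (R.mulVec x)) (R.mulVec x) = dotProduct (star x) x := by
    rw [Matrix.star_mulVec, Matrix.dotProduct_mulVec, Matrix.vecMul_vecMul, hR,
      Matrix.vecMul_one]
  simp only [dotProduct, Pi.star_apply] at h
  simp only [starRingEnd_apply]
  exact h

lemma formA (R : Matrix (Fin 2) (Fin 2) ℂ) (a : QState) (A B C : Fin 2) :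
    transform R 1 1 a A B C = R.mulVec (fun x => a x B C) A := by
  show (∑ A', ∑ B', ∑ C', R A A' * (1 : Matrix (Fin 2) (Fin 2) ℂ) B B'
      * (1 : Matrix (Fin 2) (Fin 2) ℂ) C C' * a A' B' C') = _
  fin_cases B <;> fin_cases C <;>
    simp [Matrix.mulVec, dotProduct, Matrix.one_apply, Fin.sum_univ_two] <;> ring

lemma formB (S : Matrix (Fin 2) (Fin 2) ℂ) (a : QState) (A B C : Fin 2) :
    transform 1 S 1 a A B C = S.mulVec (fun x => a A x C) B := by
  show (∑ A', ∑ B', ∑ C', (1 : Matrix (Fin 2) (Fin 2) ℂ) A A' * S B B'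
      * (1 : Matrix (Fin 2) (Fin 2) ℂ) C C' * a A' B' C') = _
  fin_cases A <;> fin_cases C <;>
    simp [Matrix.mulVec, dotProduct, Matrix.one_apply, Fin.sum_univ_two] <;> ring

lemma formC (T : Matrix (Fin 2) (Fin 2) ℂ) (a : QState) (A B C : Fin 2) :
    transform 1 1 T a A B C = T.mulVec (a A B) C := by
  show (∑ A', ∑ B', ∑ C', (1 : Matrix (Fin 2) (Fin 2) ℂ) A A'
      * (1 : Matrix (Fin 2) (Fin 2) ℂ) B B' * T C C' * a A' B' C') = _
  fin_cases A <;> fin_cases B <;>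
    simp [Matrix.mulVec, dotProduct, Matrix.one_apply, Fin.sum_univ_two] <;> ring

lemma swapBC (f : QState) :
    ∑ A, ∑ B, ∑ C, f A B C = ∑ B, ∑ C, ∑ A, f A B C := by
  rw [Finset.sum_comm]
  exact Finset.sum_congr rfl fun B _ => Finset.sum_comm

lemma swapB (f : QState) :
    ∑ A, ∑ B, ∑ C, f A B C = ∑ A, ∑ C, ∑ B, f A B C :=
  Finset.sum_congr rfl fun A _ => Finset.sum_comm

lemma norm_slotA (R : Matrix (Fin 2) (Fin 2) ℂ) (hR : R.conjTranspose * R = 1) (a : QState) :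
    ∑ A, ∑ B, ∑ C, (starRingEnd ℂ) (transform R 1 1 a A B C) * transform R 1 1 a A B C
      = ∑ A, ∑ B, ∑ C, (starRingEnd ℂ) (a A B C) * a A B C := by
  rw [swapBC, swapBC (fun A B C => (starRingEnd ℂ) (a A B C) * a A B C)]
  refine Finset.sum_congr rfl fun B _ => Finset.sum_congr rfl fun C _ => ?_
  simpa [formA] using dot_unitary R hR (fun x => a x B C)

lemma norm_slotB (S : Matrix (Fin 2) (Fin 2) ℂ) (hS : S.conjTranspose * S = 1) (a : QState) :
    ∑ A, ∑ B, ∑ C, (starRingEnd ℂ) (transform 1 S 1 a A B C) * transform 1 S 1 a A B C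
      = ∑ A, ∑ B, ∑ C, (starRingEnd ℂ) (a A B C) * a A B C := by
  rw [swapB, swapB (fun A B C => (starRingEnd ℂ) (a A B C) * a A B C)]
  refine Finset.sum_congr rfl fun A _ => Finset.sum_congr rfl fun C _ => ?_
  simpa [formB] using dot_unitary S hS (fun x => a A x C)

lemma norm_slotC (T : Matrix (Fin 2) (Fin 2) ℂ) (hT : T.conjTranspose * T = 1) (a : QState) :
    ∑ A, ∑ B, ∑ C, (starRingEnd ℂ) (transform 1 1 T a A B C) * transform 1 1 T a A B C
      = ∑ A, ∑ B, ∑ C, (starRingEnd ℂ) (a A B C) * a A B C := by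
  refine Finset.sum_congr rfl fun A _ => Finset.sum_congr rfl fun B _ => ?_
  simpa [formC] using dot_unitary T hT (a A B)
lemma norm_full (R S T : Matrix (Fin 2) (Fin 2) ℂ)
    (hR : R.conjTranspose * R = 1) (hS : S.conjTranspose * S = 1)
    (hT : T.conjTranspose * T = 1) (a : QState) :
    ∑ A, ∑ B, ∑ C, (starRingEnd ℂ) (transform R S T a A B C) * transform R S T a A B C
      = ∑ A, ∑ B, ∑ C, (starRingEnd ℂ) (a A B C) * a A B C := by
  rw [transform_decomp R S T a, norm_slotA R hR, norm_slotB S hS, norm_slotC T hT]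

lemma term_abs (z : ℂ) : ((‖z‖ ^ 2 : ℝ) : ℂ) = (starRingEnd ℂ) z * z := by
  rw [← Complex.normSq_eq_norm_sq, ← Complex.mul_conj]
  ring

lemma key_abs (v : QState) :
    ((∑ A, ∑ B, ∑ C, ‖v A B C‖ ^ 2 : ℝ) : ℂ)
      = ∑ A, ∑ B, ∑ C, (starRingEnd ℂ) (v A B C) * v A B C := by
  rw [Complex.ofReal_sum]
  refine Finset.sum_congr rfl fun A _ => ?_
  rw [Complex.ofReal_sum]
  refine Finset.sum_congr rfl fun B _ => ?_
  rw [Complex.ofReal_sum]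
  exact Finset.sum_congr rfl fun C _ => term_abs _

lemma sum_abs_sq_eq (f g : QState)
    (h : ∑ A, ∑ B, ∑ C, (starRingEnd ℂ) (f A B C) * f A B C
        = ∑ A, ∑ B, ∑ C, (starRingEnd ℂ) (g A B C) * g A B C) :
    (∑ A, ∑ B, ∑ C, ‖f A B C‖ ^ 2)
      = ∑ A, ∑ B, ∑ C, ‖g A B C‖ ^ 2 := by
  have hf := key_abs f
  have hg := key_abs g
  rw [h, ← hg] at hf
  exact_mod_cast hf

lemma parity_contra : ∀ A B C A₂ B₁ C₁ : Fin 2,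
    A + B + C = 1 → A + B₁ + C₁ = 0 → A₂ + B + C₁ = 0 → A₂ + B₁ + C = 0 → False := by
  decide

lemma one_entry_ne (i j : Fin 2) (h : (1 : Matrix (Fin 2) (Fin 2) ℂ) i j ≠ 0) : i = j := by
  by_contra hne
  exact h (Matrix.one_apply_ne hne)
lemma prod_unitary (X Y : Matrix (Fin 2) (Fin 2) ℂ)
    (hX : X.conjTranspose * X = 1) (hY : Y.conjTranspose * Y = 1) :
    (X * Y.conjTranspose).conjTranspose * (X * Y.conjTranspose) = 1 := by
  rw [Matrix.conjTranspose_mul, Matrix.conjTranspose_conjTranspose, Matrix.mul_assoc,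
    ← Matrix.mul_assoc X.conjTranspose, hX, Matrix.one_mul, mul_eq_one_comm.mp hY]
/-- no local strategy using a rank-3 (W-class) state wins the
three-player game with certainty: some losing outcome has nonzero amplitude, and
equivalently the winning probability is strictly less than 1. -/
theorem rank_three_cannot_win_with_certainty (ψ : QState)
    (hunit : ∑ A, ∑ B, ∑ C, ‖ψ A B C‖ ^ 2 = 1)
    (hT : Trip ψ ≠ 0) (hDet : CayleyDet ψ = 0)
    (R S T : Fin 2 → Matrix (Fin 2) (Fin 2) ℂ)
    (hR : ∀ i, (R i).conjTranspose * R i = 1)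
    (hS : ∀ i, (S i).conjTranspose * S i = 1)
    (hT' : ∀ i, (T i).conjTranspose * T i = 1) :
    (∃ q ∈ Questions, ∃ A B C : Fin 2, A + B + C ≠ orr q.1 q.2.1 q.2.2 ∧
      transform (R q.1) (S q.2.1) (T q.2.2) ψ A B C ≠ 0) ∧
    winProb ψ R S T < 1 := by
  have hτne : ∃ A B C, Trip ψ A B C ≠ 0 := by
    by_contra h
    push_neg at h
    exact hT (by funext A B C; exact h A B C)
  have hdets : ∀ r s t : Fin 2, (R r).det * (S s).det * (T t).det ≠ 0 := fun r s t =>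
    mul_ne_zero (mul_ne_zero (det_ne_zero _ (hR r)) (det_ne_zero _ (hS s)))
      (det_ne_zero _ (hT' t))
  have hgne : ∀ r s t : Fin 2, ∃ A B C, transform (R r) (S s) (T t) (Trip ψ) A B C ≠ 0 := by
    intro r s t
    by_contra h
    push_neg at h
    obtain ⟨A, B, C, hA⟩ := hτne
    apply hA
    have hzero : transform (R r) (S s) (T t) (Trip ψ) = (0 : QState) := by
      funext a b c; exact h a b c
    calc Trip ψ A B C
        = transform ((R r).conjTranspose * R r) ((S s).conjTranspose * S s)
            ((T t).conjTranspose * T t) (Trip ψ) A B C := by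
          rw [hR r, hS s, hT' t]; exact (transform_id _ A B C).symm
      _ = transform (R r).conjTranspose (S s).conjTranspose (T t).conjTranspose
            (transform (R r) (S s) (T t) (Trip ψ)) A B C :=
          (transform_comp _ _ _ _ _ _ _ A B C).symm
      _ = 0 := by rw [hzero]; exact transform_zero _ _ _ A B C
  have hdet0 : ∀ r s t : Fin 2, CayleyDet (transform (R r) (S s) (T t) ψ) = 0 := by
    intro r s t; rw [det_cov, hDet, mul_zero]
  have hmono : ∀ (r s t : Fin 2) (i : Fin 2 × Fin 2 × Fin 2),
      IsMono (Trip (transform (R r) (S s) (T t) ψ)) i →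
      IsMono (transform (R r) (S s) (T t) (Trip ψ)) i := by
    intro r s t i hm
    constructor
    · intro h0
      exact hm.1 (by rw [trip_cov, h0, mul_zero])
    · intro a b c hne
      have h2 := hm.2 a b c hne
      rw [trip_cov] at h2
      exact (mul_eq_zero.1 h2).resolve_left (hdets r s t)
  have htripne : ∀ r s t : Fin 2, ∃ A B C, Trip (transform (R r) (S s) (T t) ψ) A B C ≠ 0 := by
    intro r s t
    obtain ⟨A, B, C, h⟩ := hgne r s t
    exact ⟨A, B, C, by rw [trip_cov]; exact mul_ne_zero (hdets r s t) h⟩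
  have hmain : (∃ q ∈ Questions, ∃ A B C : Fin 2, A + B + C ≠ orr q.1 q.2.1 q.2.2 ∧
      transform (R q.1) (S q.2.1) (T q.2.2) ψ A B C ≠ 0) := by
    by_contra hcon
    push_neg at hcon
    obtain ⟨A, B, C, hp0, hm0⟩ := even_support_mono (transform (R 0) (S 0) (T 0) ψ)
      (hcon (0,0,0) (by decide) 0 0 1 (by decide))
      (hcon (0,0,0) (by decide) 0 1 0 (by decide))
      (hcon (0,0,0) (by decide) 1 0 0 (by decide))
      (hcon (0,0,0) (by decide) 1 1 1 (by decide))
      (hdet0 0 0 0) (htripne 0 0 0)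
    obtain ⟨A₁, B₁, C₁, hp1, hm1⟩ := odd_support_mono (transform (R 0) (S 1) (T 1) ψ)
      (hcon (0,1,1) (by decide) 0 0 0 (by decide))
      (hcon (0,1,1) (by decide) 0 1 1 (by decide))
      (hcon (0,1,1) (by decide) 1 0 1 (by decide))
      (hcon (0,1,1) (by decide) 1 1 0 (by decide))
      (hdet0 0 1 1) (htripne 0 1 1)
    obtain ⟨A₂, B₂, C₂, hp2, hm2⟩ := odd_support_mono (transform (R 1) (S 0) (T 1) ψ)
      (hcon (1,0,1) (by decide) 0 0 0 (by decide))
      (hcon (1,0,1) (by decide) 0 1 1 (by decide))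
      (hcon (1,0,1) (by decide) 1 0 1 (by decide))
      (hcon (1,0,1) (by decide) 1 1 0 (by decide))
      (hdet0 1 0 1) (htripne 1 0 1)
    obtain ⟨A₃, B₃, C₃, hp3, hm3⟩ := odd_support_mono (transform (R 1) (S 1) (T 0) ψ)
      (hcon (1,1,0) (by decide) 0 0 0 (by decide))
      (hcon (1,1,0) (by decide) 0 1 1 (by decide))
      (hcon (1,1,0) (by decide) 1 0 1 (by decide))
      (hcon (1,1,0) (by decide) 1 1 0 (by decide))
      (hdet0 1 1 0) (htripne 1 1 0)
    have hg0 := hmono 0 0 0 (A, B, C) hm0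
    have hg1 := hmono 0 1 1 (A₁, B₁, C₁) hm1
    have hg2 := hmono 1 0 1 (A₂, B₂, C₂) hm2
    have hg3 := hmono 1 1 0 (A₃, B₃, C₃) hm3
    set U := R 1 * (R 0).conjTranspose with hUdef
    set V := S 1 * (S 0).conjTranspose with hVdef
    set W := T 1 * (T 0).conjTranspose with hWdef
    have hUu : U.conjTranspose * U = 1 := prod_unitary (R 1) (R 0) (hR 1) (hR 0)
    have hVu : V.conjTranspose * V = 1 := prod_unitary (S 1) (S 0) (hS 1) (hS 0)
    have hWu : W.conjTranspose * W = 1 := prod_unitary (T 1) (T 0) (hT' 1) (hT' 0)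
    have hone : (1 : Matrix (Fin 2) (Fin 2) ℂ).conjTranspose * 1 = 1 := by simp
    have hcompU : U * R 0 = R 1 := by rw [hUdef, Matrix.mul_assoc, hR 0, Matrix.mul_one]
    have hcompV : V * S 0 = S 1 := by rw [hVdef, Matrix.mul_assoc, hS 0, Matrix.mul_one]
    have hcompW : W * T 0 = T 1 := by rw [hWdef, Matrix.mul_assoc, hT' 0, Matrix.mul_one]
    have hrel1 : ∀ a b c, transform (R 0) (S 1) (T 1) (Trip ψ) a b c
        = transform 1 V W (transform (R 0) (S 0) (T 0) (Trip ψ)) a b c := by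
      intro a b c
      rw [transform_comp, Matrix.one_mul, hcompV, hcompW]
    have hrel2 : ∀ a b c, transform (R 1) (S 0) (T 1) (Trip ψ) a b c
        = transform U 1 W (transform (R 0) (S 0) (T 0) (Trip ψ)) a b c := by
      intro a b c
      rw [transform_comp, Matrix.one_mul, hcompU, hcompW]
    have hrel3 : ∀ a b c, transform (R 1) (S 1) (T 0) (Trip ψ) a b c
        = transform U V 1 (transform (R 0) (S 0) (T 0) (Trip ψ)) a b c := by
      intro a b c
      rw [transform_comp, Matrix.one_mul, hcompU, hcompV]
    obtain ⟨⟨h1A, _⟩, ⟨hVB, hVuniq⟩, ⟨hWC, hWuniq⟩⟩ :=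
      slot_facts 1 V W hone hVu hWu _ _ A B C A₁ B₁ C₁ hg0 hg1 hrel1
    obtain ⟨⟨hUA, hUuniq⟩, ⟨h1B, _⟩, ⟨hWC2, _⟩⟩ :=
      slot_facts U 1 W hUu hone hWu _ _ A B C A₂ B₂ C₂ hg0 hg2 hrel2
    obtain ⟨⟨hUA3, _⟩, ⟨hVB3, _⟩, ⟨h1C, _⟩⟩ :=
      slot_facts U V 1 hUu hVu hone _ _ A B C A₃ B₃ C₃ hg0 hg3 hrel3
    have hA1 : A₁ = A := one_entry_ne A₁ A h1A
    have hB2 : B₂ = B := one_entry_ne B₂ B h1B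
    have hC3 : C₃ = C := one_entry_ne C₃ C h1C
    have hC2 : C₂ = C₁ := hWuniq C₂ hWC2
    have hA3 : A₃ = A₂ := hUuniq A₃ hUA3
    have hB3 : B₃ = B₁ := hVuniq B₃ hVB3
    rw [hA1] at hp1
    rw [hB2, hC2] at hp2
    rw [hA3, hB3, hC3] at hp3
    exact parity_contra A B C A₂ B₁ C₁ hp0 hp1 hp2 hp3
  refine ⟨hmain, ?_⟩
  obtain ⟨q0, hq0Q, A0, B0, C0, hlose, hamp⟩ := hmain
  have hnorm : ∀ q : Fin 2 × Fin 2 × Fin 2,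
      (∑ A, ∑ B, ∑ C,
        ‖transform (R q.1) (S q.2.1) (T q.2.2) ψ A B C‖ ^ 2) = 1 := by
    intro q
    rw [sum_abs_sq_eq _ ψ (norm_full _ _ _ (hR q.1) (hS q.2.1) (hT' q.2.2) ψ), hunit]
  set L : Fin 2 × Fin 2 × Fin 2 → ℝ := fun q =>
    ∑ A, ∑ B, ∑ C, (if A + B + C = orr q.1 q.2.1 q.2.2 then 0
      else ‖transform (R q.1) (S q.2.1) (T q.2.2) ψ A B C‖ ^ 2) with hLdef
  have hite : ∀ (q : Fin 2 × Fin 2 × Fin 2) (A B C : Fin 2),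
      (0:ℝ) ≤ (if A + B + C = orr q.1 q.2.1 q.2.2 then 0
        else ‖transform (R q.1) (S q.2.1) (T q.2.2) ψ A B C‖ ^ 2) := by
    intro q A B C
    split
    · exact le_refl 0
    · positivity
  have hLnonneg : ∀ q, 0 ≤ L q := by
    intro q
    simp only [hLdef]
    exact Finset.sum_nonneg fun A _ => Finset.sum_nonneg fun B _ =>
      Finset.sum_nonneg fun C _ => hite q A B C
  have hW : ∀ q : Fin 2 × Fin 2 × Fin 2,
      (∑ A, ∑ B, ∑ C, (if A + B + C = orr q.1 q.2.1 q.2.2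
        then ‖transform (R q.1) (S q.2.1) (T q.2.2) ψ A B C‖ ^ 2 else 0))
        = 1 - L q := by
    intro q
    have hsum : (∑ A, ∑ B, ∑ C, (if A + B + C = orr q.1 q.2.1 q.2.2
        then ‖transform (R q.1) (S q.2.1) (T q.2.2) ψ A B C‖ ^ 2 else 0)) + L q
        = ∑ A, ∑ B, ∑ C,
            ‖transform (R q.1) (S q.2.1) (T q.2.2) ψ A B C‖ ^ 2 := by
      simp only [hLdef]
      simp only [← Finset.sum_add_distrib]
      refine Finset.sum_congr rfl fun A _ => Finset.sum_congr rfl fun B _ =>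
        Finset.sum_congr rfl fun C _ => ?_
      split <;> ring
    rw [hnorm q] at hsum
    linarith
  have habs : (0:ℝ) < ‖transform (R q0.1) (S q0.2.1) (T q0.2.2) ψ A0 B0 C0‖ ^ 2 :=
    pow_pos (norm_pos_iff.mpr hamp) 2
  have hLq0 : ‖transform (R q0.1) (S q0.2.1) (T q0.2.2) ψ A0 B0 C0‖ ^ 2 ≤ L q0 := by
    have step3 : (if A0 + B0 + C0 = orr q0.1 q0.2.1 q0.2.2 then (0:ℝ)
        else ‖transform (R q0.1) (S q0.2.1) (T q0.2.2) ψ A0 B0 C0‖ ^ 2)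
        ≤ ∑ C, (if A0 + B0 + C = orr q0.1 q0.2.1 q0.2.2 then 0
          else ‖transform (R q0.1) (S q0.2.1) (T q0.2.2) ψ A0 B0 C‖ ^ 2) :=
      Finset.single_le_sum (fun c _ => hite q0 A0 B0 c) (Finset.mem_univ C0)
    have step2 : (∑ C, (if A0 + B0 + C = orr q0.1 q0.2.1 q0.2.2 then (0:ℝ)
          else ‖transform (R q0.1) (S q0.2.1) (T q0.2.2) ψ A0 B0 C‖ ^ 2))
        ≤ ∑ B, ∑ C, (if A0 + B + C = orr q0.1 q0.2.1 q0.2.2 then 0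
          else ‖transform (R q0.1) (S q0.2.1) (T q0.2.2) ψ A0 B C‖ ^ 2) :=
      Finset.single_le_sum
        (fun b _ => Finset.sum_nonneg fun c _ => hite q0 A0 b c) (Finset.mem_univ B0)
    have step1 : (∑ B, ∑ C, (if A0 + B + C = orr q0.1 q0.2.1 q0.2.2 then (0:ℝ)
          else ‖transform (R q0.1) (S q0.2.1) (T q0.2.2) ψ A0 B C‖ ^ 2))
        ≤ L q0 := by
      simp only [hLdef]
      exact Finset.single_le_sum
        (fun a _ => Finset.sum_nonneg fun b _ => Finset.sum_nonneg fun c _ => hite q0 a b c)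
        (Finset.mem_univ A0)
    rw [if_neg hlose] at step3
    linarith
  have hQsum : L q0 ≤ ∑ q ∈ Questions, L q :=
    Finset.single_le_sum (fun q _ => hLnonneg q) hq0Q
  have hc : Questions.card = 4 := by decide
  have hwp : winProb ψ R S T = (1/4) * (4 - ∑ q ∈ Questions, L q) := by
    unfold winProb
    congr 1
    rw [Finset.sum_congr rfl fun q _ => hW q, Finset.sum_sub_distrib, Finset.sum_const, hc]
    norm_num
  rw [hwp]
  linarith
end

section
/- A biseparable (rank-2) resource cannot beat the Tsirelson-type bound: if the shared unit vector is a product along the A–BC split, ψ = x ⊗ φ with x ∈ ℂ² and φ ∈ ℂ²⊗ℂ² unit vectors, then for every choice of unitary 2×2 matrices R₀, R₁, S₀, S₁, T₀, T₁ the winning probability satisfies p ≤ 1/2 + 1/(2√2). -/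
open scoped BigOperators

open scoped InnerProductSpace

/-- The A-part amplitude after applying a matrix. -/
noncomputable def wA (M : Matrix (Fin 2) (Fin 2) ℂ) (x : Fin 2 → ℂ) (A : Fin 2) : ℂ :=
  ∑ A', M A A' * x A'

/-- The BC-part amplitude after applying matrices to both slots. -/
noncomputable def wBC (S T : Matrix (Fin 2) (Fin 2) ℂ) (φ : Fin 2 → Fin 2 → ℂ)
    (B C : Fin 2) : ℂ := ∑ B', ∑ C', S B B' * T C C' * φ B' C'

/-- The conjugated observable `SᴴZS` written entrywise. -/
noncomputable def Ob (S : Matrix (Fin 2) (Fin 2) ℂ) : Matrix (Fin 2) (Fin 2) ℂ :=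
  Matrix.of fun i j => (starRingEnd ℂ) (S 0 i) * S 0 j - (starRingEnd ℂ) (S 1 i) * S 1 j

lemma Ob_unitary (S : Matrix (Fin 2) (Fin 2) ℂ) (hS : S.conjTranspose * S = 1) :
    (Ob S).conjTranspose * Ob S = 1 := by
  have hS' : S * S.conjTranspose = 1 := mul_eq_one_comm.mp hS
  have h : ∀ i j, (S.conjTranspose * S) i j = (1 : Matrix (Fin 2) (Fin 2) ℂ) i j :=
    fun i j => by rw [hS]
  have h' : ∀ i j, (S * S.conjTranspose) i j = (1 : Matrix (Fin 2) (Fin 2) ℂ) i j :=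
    fun i j => by rw [hS']
  simp only [Matrix.mul_apply, Matrix.conjTranspose_apply, Matrix.one_apply,
    Fin.sum_univ_two, Complex.star_def] at h h'
  have a00 := h' 0 0; have a01 := h' 0 1; have a10 := h' 1 0; have a11 := h' 1 1
  norm_num at a00 a01 a10 a11
  ext i j
  have hij := h i j
  simp only [Matrix.mul_apply, Matrix.conjTranspose_apply, Matrix.one_apply, Ob,
    Matrix.of_apply, Fin.sum_univ_two, map_sub, map_mul, Complex.star_def, Complex.conj_conj]
  linear_combination ((starRingEnd ℂ) (S 0 i) * S 0 j) * a00
    - ((starRingEnd ℂ) (S 0 i) * S 1 j) * a01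
    - ((starRingEnd ℂ) (S 1 i) * S 0 j) * a10
    + ((starRingEnd ℂ) (S 1 i) * S 1 j) * a11 + hij

noncomputable def uvec (S : Matrix (Fin 2) (Fin 2) ℂ) (φ : Fin 2 → Fin 2 → ℂ) :
    EuclideanSpace ℂ (Fin 2 × Fin 2) := WithLp.toLp 2 (fun q : Fin 2 × Fin 2 => ∑ B', Ob S q.1 B' * φ B' q.2)

noncomputable def vvec (T : Matrix (Fin 2) (Fin 2) ℂ) (φ : Fin 2 → Fin 2 → ℂ) :
    EuclideanSpace ℂ (Fin 2 × Fin 2) := WithLp.toLp 2 (fun q : Fin 2 × Fin 2 => ∑ C', Ob T q.2 C' * φ q.1 C')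

set_option maxHeartbeats 2000000 in
lemma beta_eq (S T : Matrix (Fin 2) (Fin 2) ℂ) (φ : Fin 2 → Fin 2 → ℂ) :
    ((Complex.normSq (wBC S T φ 0 0) - Complex.normSq (wBC S T φ 0 1)
      - Complex.normSq (wBC S T φ 1 0) + Complex.normSq (wBC S T φ 1 1) : ℝ) : ℂ)
    = ⟪uvec S φ, vvec T φ⟫_ℂ := by
  simp only [PiLp.inner_apply, RCLike.inner_apply, uvec, vvec, Ob, wBC,
    Matrix.of_apply, PiLp.toLp_apply, Fintype.sum_prod_type, Fin.sum_univ_two]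
  push_cast [Complex.normSq_eq_conj_mul_self]
  simp only [map_sum, map_mul, map_add, map_sub, Complex.star_def, Complex.conj_conj]
  ring

lemma key1 (M : Matrix (Fin 2) (Fin 2) ℂ) (hM : M.conjTranspose * M = 1) (y : Fin 2 → ℂ) :
    ∑ A, Complex.normSq (∑ A', M A A' * y A') = ∑ A, Complex.normSq (y A) := by
  have h : ∀ i j, (M.conjTranspose * M) i j = (1 : Matrix (Fin 2) (Fin 2) ℂ) i j :=
    fun i j => by rw [hM]
  simp only [Matrix.mul_apply, Matrix.conjTranspose_apply, Matrix.one_apply,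
    Fin.sum_univ_two] at h
  have h00 := h 0 0; have h01 := h 0 1; have h10 := h 1 0; have h11 := h 1 1
  norm_num at h00 h01 h10 h11
  have hc : (↑(∑ A, Complex.normSq (∑ A', M A A' * y A')) : ℂ)
      = (↑(∑ A, Complex.normSq (y A)) : ℂ) := by
    push_cast [Complex.normSq_eq_conj_mul_self]
    simp only [Fin.sum_univ_two, map_sum, map_mul, map_add]
    linear_combination ((starRingEnd ℂ) (y 0) * y 0) * h00 + ((starRingEnd ℂ) (y 0) * y 1) * h01
      + ((starRingEnd ℂ) (y 1) * y 0) * h10 + ((starRingEnd ℂ) (y 1) * y 1) * h11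
  exact_mod_cast hc

lemma unorm (S : Matrix (Fin 2) (Fin 2) ℂ) (hS : S.conjTranspose * S = 1)
    (φ : Fin 2 → Fin 2 → ℂ) (hφn : ∑ B, ∑ C, Complex.normSq (φ B C) = 1) :
    ‖uvec S φ‖ = 1 := by
  rw [EuclideanSpace.norm_eq]
  have : ∑ q : Fin 2 × Fin 2, ‖uvec S φ q‖ ^ 2 = 1 := by
    simp only [Fintype.sum_prod_type, Complex.sq_norm]
    rw [Finset.sum_comm]
    calc ∑ C : Fin 2, ∑ B : Fin 2, Complex.normSq (uvec S φ (B, C))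
        = ∑ C : Fin 2, ∑ B' : Fin 2, Complex.normSq (φ B' C) := by
          refine Finset.sum_congr rfl fun C _ => ?_
          exact key1 (Ob S) (Ob_unitary S hS) (fun B' => φ B' C)
      _ = 1 := by rw [Finset.sum_comm]; exact hφn
  rw [this, Real.sqrt_one]

lemma vnorm (T : Matrix (Fin 2) (Fin 2) ℂ) (hT : T.conjTranspose * T = 1)
    (φ : Fin 2 → Fin 2 → ℂ) (hφn : ∑ B, ∑ C, Complex.normSq (φ B C) = 1) :
    ‖vvec T φ‖ = 1 := by
  rw [EuclideanSpace.norm_eq]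
  have : ∑ q : Fin 2 × Fin 2, ‖vvec T φ q‖ ^ 2 = 1 := by
    simp only [Fintype.sum_prod_type, Complex.sq_norm]
    calc ∑ B : Fin 2, ∑ C : Fin 2, Complex.normSq (vvec T φ (B, C))
        = ∑ B : Fin 2, ∑ C' : Fin 2, Complex.normSq (φ B C') := by
          refine Finset.sum_congr rfl fun B _ => ?_
          exact key1 (Ob T) (Ob_unitary T hT) (fun C' => φ B C')
      _ = 1 := hφn
  rw [this, Real.sqrt_one]

lemma wBC_norm (S T : Matrix (Fin 2) (Fin 2) ℂ) (hS : S.conjTranspose * S = 1)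
    (hT : T.conjTranspose * T = 1) (φ : Fin 2 → Fin 2 → ℂ)
    (hφn : ∑ B, ∑ C, Complex.normSq (φ B C) = 1) :
    ∑ B, ∑ C, Complex.normSq (wBC S T φ B C) = 1 := by
  have hfact : ∀ B C, wBC S T φ B C = ∑ B', S B B' * (∑ C', T C C' * φ B' C') := by
    intro B C; simp only [wBC, Fin.sum_univ_two]; ring
  rw [Finset.sum_comm]
  calc ∑ C : Fin 2, ∑ B : Fin 2, Complex.normSq (wBC S T φ B C)
      = ∑ C : Fin 2, ∑ B' : Fin 2, Complex.normSq (∑ C', T C C' * φ B' C') := by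
        refine Finset.sum_congr rfl fun C _ => ?_
        rw [show (∑ B, Complex.normSq (wBC S T φ B C))
            = ∑ B, Complex.normSq (∑ B', S B B' * (∑ C', T C C' * φ B' C')) from
          Finset.sum_congr rfl fun B _ => by rw [hfact]]
        exact key1 S hS (fun B' => ∑ C', T C C' * φ B' C')
    _ = ∑ B' : Fin 2, ∑ C' : Fin 2, Complex.normSq (φ B' C') := by
        rw [Finset.sum_comm]
        refine Finset.sum_congr rfl fun B' _ => ?_
        exact key1 T hT (fun C' => φ B' C')
    _ = 1 := hφn

lemma transform_fact (R S T : Matrix (Fin 2) (Fin 2) ℂ) (x : Fin 2 → ℂ)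
    (φ : Fin 2 → Fin 2 → ℂ) (ψ : QState)
    (hψ : ∀ A B C : Fin 2, ψ A B C = x A * φ B C) (A B C : Fin 2) :
    transform R S T ψ A B C = wA R x A * wBC S T φ B C := by
  simp only [transform, wA, wBC, hψ, Fin.sum_univ_two]; ring

lemma winProb_eq (ψ : QState) (x : Fin 2 → ℂ) (φ : Fin 2 → Fin 2 → ℂ)
    (hψ : ∀ A B C : Fin 2, ψ A B C = x A * φ B C)
    (R S T : Fin 2 → Matrix (Fin 2) (Fin 2) ℂ)
    (hp : ∀ r, Complex.normSq (wA (R r) x 0) + Complex.normSq (wA (R r) x 1) = 1)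
    (hq : ∀ s t, Complex.normSq (wBC (S s) (T t) φ 0 0) + Complex.normSq (wBC (S s) (T t) φ 0 1)
      + Complex.normSq (wBC (S s) (T t) φ 1 0) + Complex.normSq (wBC (S s) (T t) φ 1 1) = 1) :
    winProb ψ R S T = 1/2 + (
      (Complex.normSq (wA (R 0) x 0) - Complex.normSq (wA (R 0) x 1)) *
        ((Complex.normSq (wBC (S 0) (T 0) φ 0 0) - Complex.normSq (wBC (S 0) (T 0) φ 0 1)
          - Complex.normSq (wBC (S 0) (T 0) φ 1 0) + Complex.normSq (wBC (S 0) (T 0) φ 1 1))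
        - (Complex.normSq (wBC (S 1) (T 1) φ 0 0) - Complex.normSq (wBC (S 1) (T 1) φ 0 1)
          - Complex.normSq (wBC (S 1) (T 1) φ 1 0) + Complex.normSq (wBC (S 1) (T 1) φ 1 1)))
      - (Complex.normSq (wA (R 1) x 0) - Complex.normSq (wA (R 1) x 1)) *
        ((Complex.normSq (wBC (S 0) (T 1) φ 0 0) - Complex.normSq (wBC (S 0) (T 1) φ 0 1)
          - Complex.normSq (wBC (S 0) (T 1) φ 1 0) + Complex.normSq (wBC (S 0) (T 1) φ 1 1))
        + (Complex.normSq (wBC (S 1) (T 0) φ 0 0) - Complex.normSq (wBC (S 1) (T 0) φ 0 1)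
          - Complex.normSq (wBC (S 1) (T 0) φ 1 0) + Complex.normSq (wBC (S 1) (T 0) φ 1 1)))
      ) / 8 := by
  have e0 := hp 0; have e1 := hp 1
  have f00 := hq 0 0; have f01 := hq 0 1; have f10 := hq 1 0; have f11 := hq 1 1
  rw [winProb]
  rw [show Questions = {((0:Fin 2),(0:Fin 2),(0:Fin 2)), (0,1,1), (1,0,1), (1,1,0)} from rfl]
  rw [Finset.sum_insert (by decide), Finset.sum_insert (by decide),
    Finset.sum_insert (by decide), Finset.sum_singleton]
  simp only [Fin.sum_univ_two, transform_fact _ _ _ x φ ψ hψ, norm_mul, mul_pow, Complex.sq_norm]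
  simp (config := { decide := true }) only [orr]
  norm_num
  have g1 := congrArg₂ (· * ·) e0 f00
  have g2 := congrArg₂ (· * ·) e0 f11
  have g3 := congrArg₂ (· * ·) e1 f01
  have g4 := congrArg₂ (· * ·) e1 f10
  simp only [mul_one] at g1 g2 g3 g4
  linear_combination (1/8:ℝ) * (g1 + g2 + g3 + g4)

set_option maxHeartbeats 1000000 in
/-- a biseparable (rank-2) resource cannot beat the Tsirelson-type
bound: if the shared unit vector is a product along the A–BC split then every local
strategy wins with probability at most `1/2 + 1/(2√2)`. -/
theorem biseparable_tsirelson_bound (ψ : QState)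
    (x : Fin 2 → ℂ) (φ : Fin 2 → Fin 2 → ℂ)
    (hx : ∑ A, ‖x A‖ ^ 2 = 1)
    (hφ : ∑ B, ∑ C, ‖φ B C‖ ^ 2 = 1)
    (hψ : ∀ A B C : Fin 2, ψ A B C = x A * φ B C)
    (R S T : Fin 2 → Matrix (Fin 2) (Fin 2) ℂ)
    (hR : ∀ i, (R i).conjTranspose * R i = 1)
    (hS : ∀ i, (S i).conjTranspose * S i = 1)
    (hT : ∀ i, (T i).conjTranspose * T i = 1) :
    winProb ψ R S T ≤ 1/2 + 1/(2 * Real.sqrt 2) := by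
  -- normalizations in `normSq` form
  have hxn : ∑ A, Complex.normSq (x A) = 1 := by
    simpa only [Complex.sq_norm] using hx
  have hφn : ∑ B, ∑ C, Complex.normSq (φ B C) = 1 := by
    simpa only [Complex.sq_norm] using hφ
  have hp : ∀ r, Complex.normSq (wA (R r) x 0) + Complex.normSq (wA (R r) x 1) = 1 := by
    intro r
    have h := (key1 (R r) (hR r) x).trans hxn
    simpa [wA, Fin.sum_univ_two] using h
  have hq : ∀ s t, Complex.normSq (wBC (S s) (T t) φ 0 0) + Complex.normSq (wBC (S s) (T t) φ 0 1)
      + Complex.normSq (wBC (S s) (T t) φ 1 0) + Complex.normSq (wBC (S s) (T t) φ 1 1) = 1 := by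
    intro s t
    have h := wBC_norm (S s) (T t) (hS s) (hT t) φ hφn
    simp only [Fin.sum_univ_two] at h
    linarith
  rw [winProb_eq ψ x φ hψ R S T hp hq]
  -- inner product form of the correlators
  have hb : ∀ s t : Fin 2,
      Complex.normSq (wBC (S s) (T t) φ 0 0) - Complex.normSq (wBC (S s) (T t) φ 0 1)
        - Complex.normSq (wBC (S s) (T t) φ 1 0) + Complex.normSq (wBC (S s) (T t) φ 1 1)
      = (⟪uvec (S s) φ, vvec (T t) φ⟫_ℂ).re := fun s t =>
    (Complex.ofReal_re _).symm.trans (congrArg Complex.re (beta_eq (S s) (T t) φ))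
  rw [hb 0 0, hb 1 1, hb 0 1, hb 1 0]
  set a0 : ℝ := Complex.normSq (wA (R 0) x 0) - Complex.normSq (wA (R 0) x 1) with ha0
  set a1 : ℝ := Complex.normSq (wA (R 1) x 0) - Complex.normSq (wA (R 1) x 1) with ha1
  set u0 := uvec (S 0) φ
  set u1 := uvec (S 1) φ
  set v0 := vvec (T 0) φ
  set v1 := vvec (T 1) φ
  have hu0 : ‖u0‖ = 1 := unorm (S 0) (hS 0) φ hφn
  have hu1 : ‖u1‖ = 1 := unorm (S 1) (hS 1) φ hφn
  have hv0 : ‖v0‖ = 1 := vnorm (T 0) (hT 0) φ hφn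
  have hv1 : ‖v1‖ = 1 := vnorm (T 1) (hT 1) φ hφn
  have ha0sq : a0 ^ 2 ≤ 1 := by
    have h := hp 0
    have h1 := Complex.normSq_nonneg (wA (R 0) x 0)
    have h2 := Complex.normSq_nonneg (wA (R 0) x 1)
    nlinarith [h, h1, h2]
  have ha1sq : a1 ^ 2 ≤ 1 := by
    have h := hp 1
    have h1 := Complex.normSq_nonneg (wA (R 1) x 0)
    have h2 := Complex.normSq_nonneg (wA (R 1) x 1)
    nlinarith [h, h1, h2]
  set w1 : EuclideanSpace ℂ (Fin 2 × Fin 2) := a0 • u0 - a1 • u1 with hw1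
  set w2 : EuclideanSpace ℂ (Fin 2 × Fin 2) := a1 • u0 + a0 • u1 with hw2
  -- rewrite the CHSH combination via the two auxiliary vectors
  have hsl : ∀ (r : ℝ) (p q : EuclideanSpace ℂ (Fin 2 × Fin 2)),
      ⟪r • p, q⟫_ℂ = (r : ℂ) * ⟪p, q⟫_ℂ := fun r p q => by
    have h := inner_smul_real_left (𝕜 := ℂ) p q r
    rw [Complex.real_smul] at h; exact h
  have hsr : ∀ (r : ℝ) (p q : EuclideanSpace ℂ (Fin 2 × Fin 2)),
      ⟪p, r • q⟫_ℂ = (r : ℂ) * ⟪p, q⟫_ℂ := fun r p q => by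
    have h := inner_smul_real_right (𝕜 := ℂ) p q r
    rw [Complex.real_smul] at h; exact h
  have hcomb : a0 * ((⟪u0, v0⟫_ℂ).re - (⟪u1, v1⟫_ℂ).re)
      - a1 * ((⟪u0, v1⟫_ℂ).re + (⟪u1, v0⟫_ℂ).re)
      = (⟪w1, v0⟫_ℂ).re - (⟪w2, v1⟫_ℂ).re := by
    rw [hw1, hw2]
    simp only [inner_sub_left, inner_add_left, hsl, Complex.sub_re, Complex.add_re,
      Complex.mul_re, Complex.ofReal_re, Complex.ofReal_im, zero_mul, sub_zero]
    ring
  have hcs1 : (⟪w1, v0⟫_ℂ).re ≤ ‖w1‖ := by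
    calc (⟪w1, v0⟫_ℂ).re ≤ ‖⟪w1, v0⟫_ℂ‖ := Complex.re_le_norm _
      _ = ‖⟪w1, v0⟫_ℂ‖ := rfl
      _ ≤ ‖w1‖ * ‖v0‖ := norm_inner_le_norm _ _
      _ = ‖w1‖ := by rw [hv0, mul_one]
  have hcs2 : -(⟪w2, v1⟫_ℂ).re ≤ ‖w2‖ := by
    have h1 : |(⟪w2, v1⟫_ℂ).re| ≤ ‖⟪w2, v1⟫_ℂ‖ := Complex.abs_re_le_norm _
    have h2 : ‖⟪w2, v1⟫_ℂ‖ ≤ ‖w2‖ * ‖v1‖ := norm_inner_le_norm _ _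
    rw [hv1, mul_one] at h2
    have := abs_le.mp (h1.trans h2)
    linarith [this.1]
  -- norms of the auxiliary vectors
  have hn1 : ‖w1‖ ^ 2 = a0 ^ 2 - 2 * (a0 * a1) * (⟪u0, u1⟫_ℂ).re + a1 ^ 2 := by
    rw [hw1, @norm_sub_sq ℂ]
    simp only [hsl, hsr, RCLike.re_to_complex, Complex.mul_re, Complex.ofReal_re,
      Complex.ofReal_im, zero_mul, sub_zero, norm_smul, Real.norm_eq_abs, mul_pow,
      sq_abs, hu0, hu1]
    ring
  have hn2 : ‖w2‖ ^ 2 = a1 ^ 2 + 2 * (a0 * a1) * (⟪u0, u1⟫_ℂ).re + a0 ^ 2 := by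
    rw [hw2, @norm_add_sq ℂ]
    simp only [hsl, hsr, RCLike.re_to_complex, Complex.mul_re, Complex.ofReal_re,
      Complex.ofReal_im, zero_mul, sub_zero, norm_smul, Real.norm_eq_abs, mul_pow,
      sq_abs, hu0, hu1]
    ring
  have hsumsq : ‖w1‖ ^ 2 + ‖w2‖ ^ 2 ≤ 4 := by
    rw [hn1, hn2]; nlinarith [ha0sq, ha1sq]
  have hw1n : 0 ≤ ‖w1‖ := norm_nonneg _
  have hw2n : 0 ≤ ‖w2‖ := norm_nonneg _
  have hs2 : Real.sqrt 2 * Real.sqrt 2 = 2 := Real.mul_self_sqrt (by norm_num)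
  have hs2pos : 0 < Real.sqrt 2 := Real.sqrt_pos.mpr (by norm_num)
  have hbound : ‖w1‖ + ‖w2‖ ≤ 2 * Real.sqrt 2 := by
    nlinarith [sq_nonneg (‖w1‖ - ‖w2‖), sq_nonneg (‖w1‖ + ‖w2‖ - 2 * Real.sqrt 2),
      hsumsq, hs2, hs2pos.le, hw1n, hw2n]
  have hE : a0 * ((⟪u0, v0⟫_ℂ).re - (⟪u1, v1⟫_ℂ).re)
      - a1 * ((⟪u0, v1⟫_ℂ).re + (⟪u1, v0⟫_ℂ).re) ≤ 2 * Real.sqrt 2 := by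
    rw [hcomb]
    have : (⟪w1, v0⟫_ℂ).re - (⟪w2, v1⟫_ℂ).re ≤ ‖w1‖ + ‖w2‖ := by linarith
    linarith
  have hkey : (2 * Real.sqrt 2) / 8 = 1 / (2 * Real.sqrt 2) := by
    rw [div_eq_div_iff (by norm_num) (by positivity)]
    nlinarith [hs2]
  have h8 : (a0 * ((⟪u0, v0⟫_ℂ).re - (⟪u1, v1⟫_ℂ).re)
      - a1 * ((⟪u0, v1⟫_ℂ).re + (⟪u1, v0⟫_ℂ).re)) / 8 ≤ (2 * Real.sqrt 2) / 8 :=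
    (div_le_div_iff_of_pos_right (by norm_num : (0:ℝ) < 8)).mpr hE
  rw [hkey] at h8
  linarith [h8]
end

section
/- A totally separable (rank-1) resource gives no quantum advantage: if the shared unit vector is a product state, ψ_{ABC} = x_A y_B z_C with x, y, z ∈ ℂ² unit vectors, then for every choice of unitary 2×2 matrices R₀, R₁, S₀, S₁, T₀, T₁ the winning probability satisfies p ≤ 3/4. -/
open scoped BigOperators

lemma Ebound (x w y u z v : ℝ)
    (hx : |x| ≤ 1) (hw : |w| ≤ 1) (hy : |y| ≤ 1) (hu : |u| ≤ 1)
    (hz : |z| ≤ 1) (hv : |v| ≤ 1) :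
    x*y*z - x*u*v - w*y*v - w*u*z ≤ 2 := by
  set s := y*z - u*v with hs
  set t := y*v + u*z with ht
  have h1 : x*y*z - x*u*v ≤ |s| := by
    calc x*y*z - x*u*v = x*s := by rw [hs]; ring
    _ ≤ |x*s| := le_abs_self _
    _ = |x| * |s| := abs_mul _ _
    _ ≤ 1 * |s| := mul_le_mul_of_nonneg_right hx (abs_nonneg _)
    _ = |s| := one_mul _
  have h2 : -(w*y*v + w*u*z) ≤ |t| := by
    calc -(w*y*v + w*u*z) = (-w)*t := by rw [ht]; ring
    _ ≤ |(-w)*t| := le_abs_self _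
    _ = |w| * |t| := by rw [abs_mul, abs_neg]
    _ ≤ 1 * |t| := mul_le_mul_of_nonneg_right hw (abs_nonneg _)
    _ = |t| := one_mul _
  have hzv1 : |z+v| + |z-v| ≤ 2 := by
    obtain ⟨hz1, hz2⟩ := abs_le.mp hz
    obtain ⟨hv1, hv2⟩ := abs_le.mp hv
    rcases abs_cases (z+v) with ⟨e1,_⟩|⟨e1,_⟩ <;> rcases abs_cases (z-v) with ⟨e2,_⟩|⟨e2,_⟩ <;>
      rw [e1, e2] <;> linarith
  have hst1 : |s+t| ≤ 2 := by
    calc |s+t| = |y*(z+v) + u*(z-v)| := by rw [hs, ht]; ring_nf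
    _ ≤ |y*(z+v)| + |u*(z-v)| := abs_add_le _ _
    _ = |y| * |z+v| + |u| * |z-v| := by rw [abs_mul, abs_mul]
    _ ≤ 1 * |z+v| + 1 * |z-v| := by
        gcongr
    _ ≤ 2 := by linarith
  have hst2 : |s-t| ≤ 2 := by
    calc |s-t| = |y*(z-v) - u*(z+v)| := by rw [hs, ht]; ring_nf
    _ ≤ |y*(z-v)| + |u*(z+v)| := abs_sub _ _
    _ = |y| * |z-v| + |u| * |z+v| := by rw [abs_mul, abs_mul]
    _ ≤ 1 * |z-v| + 1 * |z+v| := by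
        gcongr
    _ ≤ 2 := by linarith
  obtain ⟨hp1, hp2⟩ := abs_le.mp hst1
  obtain ⟨hq1, hq2⟩ := abs_le.mp hst2
  have h3 : |s| + |t| ≤ 2 := by
    rcases abs_cases s with ⟨e1,_⟩|⟨e1,_⟩ <;> rcases abs_cases t with ⟨e2,_⟩|⟨e2,_⟩ <;>
      rw [e1, e2] <;> linarith
  linarith

lemma key (a0 a1 b0 b1 c0 c1 a0' a1' b0' b1' c0' c1' : ℝ)
    (ha0 : 0 ≤ a0) (ha1 : 0 ≤ a1) (hb0 : 0 ≤ b0) (hb1 : 0 ≤ b1)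
    (hc0 : 0 ≤ c0) (hc1 : 0 ≤ c1)
    (ha0' : 0 ≤ a0') (ha1' : 0 ≤ a1') (hb0' : 0 ≤ b0') (hb1' : 0 ≤ b1')
    (hc0' : 0 ≤ c0') (hc1' : 0 ≤ c1')
    (hA0 : a0' + a0 = 1) (hA1 : a1' + a1 = 1)
    (hB0 : b0' + b0 = 1) (hB1 : b1' + b1 = 1)
    (hC0 : c0' + c0 = 1) (hC1 : c1' + c1 = 1) :
    (a0' * b0' * c0' + a0' * b0 * c0 + a0 * b0' * c0 + a0 * b0 * c0')
    + (a0' * b1' * c1 + a0' * b1 * c1' + a0 * b1' * c1' + a0 * b1 * c1)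
    + (a1' * b0' * c1 + a1' * b0 * c1' + a1 * b0' * c1' + a1 * b0 * c1)
    + (a1' * b1' * c0 + a1' * b1 * c0' + a1 * b1' * c0' + a1 * b1 * c0) ≤ 3 := by
  have e1 : a0' = 1 - a0 := by linarith
  have e2 : a1' = 1 - a1 := by linarith
  have e3 : b0' = 1 - b0 := by linarith
  have e4 : b1' = 1 - b1 := by linarith
  have e5 : c0' = 1 - c0 := by linarith
  have e6 : c1' = 1 - c1 := by linarith
  subst e1 e2 e3 e4 e5 e6
  have hE := Ebound (1-2*a0) (1-2*a1) (1-2*b0) (1-2*b1) (1-2*c0) (1-2*c1)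
    (abs_le.mpr ⟨by linarith, by linarith⟩) (abs_le.mpr ⟨by linarith, by linarith⟩)
    (abs_le.mpr ⟨by linarith, by linarith⟩) (abs_le.mpr ⟨by linarith, by linarith⟩)
    (abs_le.mpr ⟨by linarith, by linarith⟩) (abs_le.mpr ⟨by linarith, by linarith⟩)
  nlinarith [hE]


lemma unit_vec (R : Matrix (Fin 2) (Fin 2) ℂ) (hR : R.conjTranspose * R = 1)
    (x : Fin 2 → ℂ) (hx : ‖x 0‖ ^ 2 + ‖x 1‖ ^ 2 = 1) :
    ‖∑ A', R 0 A' * x A'‖ ^ 2 + ‖∑ A', R 1 A' * x A'‖ ^ 2 = 1 := by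
  have hent : ∀ i j, (starRingEnd ℂ) (R 0 i) * R 0 j + (starRingEnd ℂ) (R 1 i) * R 1 j
      = if i = j then 1 else 0 := by
    intro i j
    simpa [Matrix.mul_apply, Matrix.conjTranspose_apply, Fin.sum_univ_two,
      Matrix.one_apply] using congrFun (congrFun hR.symm i) j |>.symm
  have h00 := hent 0 0
  have h01 := hent 0 1
  have h10 := hent 1 0
  have h11 := hent 1 1
  norm_num at h00 h01 h10 h11
  have hc : (∑ A', R 0 A' * x A') * (starRingEnd ℂ) (∑ A', R 0 A' * x A')
      + (∑ A', R 1 A' * x A') * (starRingEnd ℂ) (∑ A', R 1 A' * x A')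
      = x 0 * (starRingEnd ℂ) (x 0) + x 1 * (starRingEnd ℂ) (x 1) := by
    simp only [Fin.sum_univ_two, map_add, map_mul]
    linear_combination (x 0 * (starRingEnd ℂ) (x 0)) * h00
      + ((starRingEnd ℂ) (x 0) * x 1) * h01
      + (x 0 * (starRingEnd ℂ) (x 1)) * h10
      + (x 1 * (starRingEnd ℂ) (x 1)) * h11
  simp only [Complex.mul_conj] at hc
  have : (Complex.normSq (∑ A', R 0 A' * x A') + Complex.normSq (∑ A', R 1 A' * x A') : ℝ)
      = Complex.normSq (x 0) + Complex.normSq (x 1) := by exact_mod_cast hc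
  simp only [Complex.sq_norm] at hx ⊢
  linarith [this, hx]

lemma qterm (f g h : Fin 2 → ℝ) (o : Fin 2) :
    (∑ A : Fin 2, ∑ B : Fin 2, ∑ C : Fin 2, if A + B + C = o then f A * g B * h C else 0)
    = if o = 0 then f 0 * g 0 * h 0 + f 0 * g 1 * h 1 + f 1 * g 0 * h 1 + f 1 * g 1 * h 0
      else f 0 * g 0 * h 1 + f 0 * g 1 * h 0 + f 1 * g 0 * h 0 + f 1 * g 1 * h 1 := by
  fin_cases o <;> simp [Fin.sum_univ_two] <;> ring

/-- a totally separable (rank-1) resource gives no quantum advantage: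
if the shared unit vector is a product state then every local strategy wins with
probability at most `3/4`. -/
theorem separable_no_quantum_advantage (ψ : QState)
    (x y z : Fin 2 → ℂ)
    (hx : ∑ A, ‖x A‖ ^ 2 = 1)
    (hy : ∑ B, ‖y B‖ ^ 2 = 1)
    (hz : ∑ C, ‖z C‖ ^ 2 = 1)
    (hψ : ∀ A B C : Fin 2, ψ A B C = x A * y B * z C)
    (R S T : Fin 2 → Matrix (Fin 2) (Fin 2) ℂ)
    (hR : ∀ i, (R i).conjTranspose * R i = 1)
    (hS : ∀ i, (S i).conjTranspose * S i = 1)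
    (hT : ∀ i, (T i).conjTranspose * T i = 1) :
    winProb ψ R S T ≤ 3/4 := by
  
  have hx2 : ‖x 0‖ ^ 2 + ‖x 1‖ ^ 2 = 1 := by
    simpa [Fin.sum_univ_two] using hx
  have hy2 : ‖y 0‖ ^ 2 + ‖y 1‖ ^ 2 = 1 := by
    simpa [Fin.sum_univ_two] using hy
  have hz2 : ‖z 0‖ ^ 2 + ‖z 1‖ ^ 2 = 1 := by
    simpa [Fin.sum_univ_two] using hz
  set p : Fin 2 → Fin 2 → ℝ := fun r A => ‖∑ A', R r A A' * x A'‖ ^ 2 with hp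
  set q : Fin 2 → Fin 2 → ℝ := fun s B => ‖∑ B', S s B B' * y B'‖ ^ 2 with hq
  set w : Fin 2 → Fin 2 → ℝ := fun t C => ‖∑ C', T t C C' * z C'‖ ^ 2 with hw
  have hpA : ∀ r, p r 0 + p r 1 = 1 := fun r => unit_vec (R r) (hR r) x hx2
  have hqA : ∀ s, q s 0 + q s 1 = 1 := fun s => unit_vec (S s) (hS s) y hy2
  have hwA : ∀ t, w t 0 + w t 1 = 1 := fun t => unit_vec (T t) (hT t) z hz2
  have hpn : ∀ r A, 0 ≤ p r A := fun r A => by rw [hp]; positivity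
  have hqn : ∀ s B, 0 ≤ q s B := fun s B => by rw [hq]; positivity
  have hwn : ∀ t C, 0 ≤ w t C := fun t C => by rw [hw]; positivity
  have htr : ∀ r s t A B C, ‖transform (R r) (S s) (T t) ψ A B C‖ ^ 2
      = p r A * q s B * w t C := by
    intro r s t A B C
    have e : transform (R r) (S s) (T t) ψ A B C
        = (∑ A', R r A A' * x A') * (∑ B', S s B B' * y B') * (∑ C', T t C C' * z C') := by
      simp only [transform, hψ, Fin.sum_univ_two]; ring
    rw [e, norm_mul, norm_mul, mul_pow, mul_pow]
  have hwin : winProb ψ R S T = (1/4) * (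
      (p 0 0 * q 0 0 * w 0 0 + p 0 0 * q 0 1 * w 0 1 + p 0 1 * q 0 0 * w 0 1
        + p 0 1 * q 0 1 * w 0 0)
    + (p 0 0 * q 1 0 * w 1 1 + p 0 0 * q 1 1 * w 1 0 + p 0 1 * q 1 0 * w 1 0
        + p 0 1 * q 1 1 * w 1 1)
    + (p 1 0 * q 0 0 * w 1 1 + p 1 0 * q 0 1 * w 1 0 + p 1 1 * q 0 0 * w 1 0
        + p 1 1 * q 0 1 * w 1 1)
    + (p 1 0 * q 1 0 * w 0 1 + p 1 0 * q 1 1 * w 0 0 + p 1 1 * q 1 0 * w 0 0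
        + p 1 1 * q 1 1 * w 0 1)) := by
    rw [winProb]
    rw [show Questions = insert ((0:Fin 2),(0:Fin 2),(0:Fin 2))
      (insert (0,1,1) (insert (1,0,1) {(1,1,0)})) from rfl]
    rw [Finset.sum_insert (by decide), Finset.sum_insert (by decide),
      Finset.sum_insert (by decide), Finset.sum_singleton]
    simp only [htr, qterm]
    norm_num [orr]
    ring
  have kk := key (p 0 1) (p 1 1) (q 0 1) (q 1 1) (w 0 1) (w 1 1)
    (p 0 0) (p 1 0) (q 0 0) (q 1 0) (w 0 0) (w 1 0)
    (hpn 0 1) (hpn 1 1) (hqn 0 1) (hqn 1 1) (hwn 0 1) (hwn 1 1)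
    (hpn 0 0) (hpn 1 0) (hqn 0 0) (hqn 1 0) (hwn 0 0) (hwn 1 0)
    (hpA 0) (hpA 1) (hqA 0) (hqA 1) (hwA 0) (hwA 1)
  rw [hwin]
  linarith [kk]
end
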